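/- Under the K-user deterministic design, for any two indices j < j' in {1, …, r}, the rank over 𝔽₂ of the horizontal concatenation [S^{q − n_j} G_j | S^{q − n_{j'}} G_{j'}] equals rank(S^{q − n_j} G_j) + rank(S^{q − n_{j'}} G_{j'}) = m_j + m_{j'}, where S is the q × q down-shift matrix. -/

import Mathlib

noncomputable section

/-- The `q × q` down-shift matrix over `𝔽₂`: `S i j = 1` iff `i = j + 1`. -/
def shiftMatrix (q : ℕ) : Matrix (Fin q) (Fin q) (ZMod 2) :=
  Matrix.of fun i j => if (i : ℕ) = (j : ℕ) + 1 then 1 else 0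

/-- The `q × mm` vertical block matrix whose rows `off, …, off + mm - 1` form `F`
and whose other rows are zero. -/
def blockAt (q mm off : ℕ) (F : Matrix (Fin mm) (Fin mm) (ZMod 2)) :
    Matrix (Fin q) (Fin mm) (ZMod 2) :=
  Matrix.of fun i j =>
    if h : off ≤ (i : ℕ) ∧ (i : ℕ) < off + mm then F ⟨(i : ℕ) - off, by omega⟩ j else 0

/-- The generator matrix `G_j` of the `K`-user deterministic design: the `q × m_j`
vertical block matrix `[0^{(n_j − Σ_{i≥j} m_i) × m_j}; F_j; 0^{(Σ_{i>j} m_i) × m_j};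
0^{(q − n_j) × m_j}]`. -/
def Gmat {r : ℕ} (n m : Fin r → ℕ) (q : ℕ)
    (F : ∀ j : Fin r, Matrix (Fin (m j)) (Fin (m j)) (ZMod 2)) (j : Fin r) :
    Matrix (Fin q) (Fin (m j)) (ZMod 2) :=
  blockAt q (m j) (n j - ∑ i ∈ Finset.Ici j, m i) (F j)

lemma shiftMatrix_apply (q : ℕ) (i k : Fin q) :
    shiftMatrix q i k = if (i : ℕ) = (k : ℕ) + 1 then 1 else 0 := rfl

lemma shiftPow_apply (q p : ℕ) (i k : Fin q) :
    (shiftMatrix q ^ p) i k = if (i : ℕ) = (k : ℕ) + p then 1 else 0 := by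
  induction p generalizing i k with
  | zero =>
    simp [Matrix.one_apply, Fin.ext_iff]
  | succ p ih =>
    rw [pow_succ, Matrix.mul_apply]
    by_cases h : (i : ℕ) = (k : ℕ) + (p + 1)
    · have hk1 : (k : ℕ) + 1 < q := by omega
      rw [Finset.sum_eq_single ⟨(k : ℕ) + 1, hk1⟩]
      · rw [ih, shiftMatrix_apply]
        simp only [Fin.val_mk]
        rw [if_pos (show (i : ℕ) = (k : ℕ) + 1 + p by omega), if_pos h]
        simp
      · intro b _ hb
        rcases eq_or_ne ((b : ℕ)) ((k : ℕ) + 1) with hb' | hb'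
        · exact absurd (Fin.ext hb') hb
        · rw [shiftMatrix_apply, if_neg hb', mul_zero]
      · simp
    · rw [if_neg h]
      apply Finset.sum_eq_zero
      intro b _
      rcases eq_or_ne ((i : ℕ)) ((b : ℕ) + p) with h1 | h1
      · rw [shiftMatrix_apply, if_neg (by omega), mul_zero]
      · rw [ih, if_neg h1, zero_mul]

lemma shiftPow_mul_blockAt (q mm off p : ℕ) (F : Matrix (Fin mm) (Fin mm) (ZMod 2))
    (h : off + mm + p ≤ q) :
    shiftMatrix q ^ p * blockAt q mm off F = blockAt q mm (off + p) F := by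
  ext i c
  rw [Matrix.mul_apply]
  by_cases hp : p ≤ (i : ℕ)
  · have hip : (i : ℕ) - p < q := by omega
    rw [Finset.sum_eq_single ⟨(i : ℕ) - p, hip⟩]
    · rw [shiftPow_apply]
      simp only [Fin.val_mk]
      rw [if_pos (by omega), one_mul]
      simp only [blockAt, Matrix.of_apply, Fin.val_mk]
      by_cases hc : off ≤ (i : ℕ) - p ∧ (i : ℕ) - p < off + mm
      · rw [dif_pos hc, dif_pos (by omega : off + p ≤ (i : ℕ) ∧ (i : ℕ) < off + p + mm)]
        congr 1
        apply Fin.ext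
        simp only [Fin.val_mk]
        omega
      · rw [dif_neg hc, dif_neg (by omega)]
    · intro b _ hb
      have hne : (i : ℕ) ≠ (b : ℕ) + p := by
        intro hEq
        apply hb
        apply Fin.ext
        simp only [Fin.val_mk]
        omega
      rw [shiftPow_apply, if_neg hne, zero_mul]
    · simp
  · have hz : ∀ b ∈ Finset.univ, (shiftMatrix q ^ p) i b * blockAt q mm off F b c = 0 := by
      intro b _
      rw [shiftPow_apply, if_neg (by omega), zero_mul]
    rw [Finset.sum_eq_zero hz]
    simp only [blockAt, Matrix.of_apply]
    rw [dif_neg (by omega)]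

/-- row selection: `M.submatrix f id = (1.submatrix f id) * M` -/
lemma submatrix_eq_sel_mul {a : Type*} [Fintype a] [DecidableEq a] {q : ℕ} {c : Type*}
    [Fintype c] (M : Matrix (Fin q) c (ZMod 2)) (f : a → Fin q) :
    M.submatrix f id = (1 : Matrix (Fin q) (Fin q) (ZMod 2)).submatrix f id * M := by
  ext k x
  rw [Matrix.mul_apply]
  rw [Finset.sum_eq_single (f k)]
  · simp [Matrix.one_apply]
  · intro b _ hb
    simp [Matrix.one_apply, hb.symm]
  · simp

lemma rank_submatrix_rows_le {a : Type*} [Fintype a] [DecidableEq a] {q : ℕ} {c : Type*}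
    [Fintype c] [DecidableEq c] (M : Matrix (Fin q) c (ZMod 2)) (f : a → Fin q) :
    (M.submatrix f id).rank ≤ M.rank := by
  rw [submatrix_eq_sel_mul]
  exact Matrix.rank_mul_le_right _ _

lemma blockAt_rank (q mm off : ℕ) (F : Matrix (Fin mm) (Fin mm) (ZMod 2))
    (hF : IsUnit F) (h : off + mm ≤ q) : (blockAt q mm off F).rank = mm := by
  apply le_antisymm
  · simpa using (blockAt q mm off F).rank_le_card_width
  · have hsub : (blockAt q mm off F).submatrix
        (fun k : Fin mm => (⟨off + (k : ℕ), by omega⟩ : Fin q)) id = F := by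
      ext k x
      simp only [Matrix.submatrix_apply, blockAt, Matrix.of_apply, id, Fin.val_mk]
      rw [dif_pos (by omega)]
      congr 1
      apply Fin.ext
      simp only [Fin.val_mk]
      omega
    have hFr : F.rank = mm := by rw [Matrix.rank_of_isUnit F hF]; simp
    calc mm = F.rank := hFr.symm
      _ = ((blockAt q mm off F).submatrix
            (fun k : Fin mm => (⟨off + (k : ℕ), by omega⟩ : Fin q)) id).rank := by rw [hsub]
      _ ≤ _ := rank_submatrix_rows_le _ _

theorem rank_concat_pair (r : ℕ) (hr : 1 ≤ r) (n : Fin r → ℕ)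
    (hanti : ∀ i j : Fin r, i ≤ j → n j ≤ n i) (q : ℕ) (hq : q = n ⟨0, hr⟩)
    (m : Fin r → ℕ) (hm : ∀ j : Fin r, (∑ i ∈ Finset.Ici j, m i) ≤ n j)
    (F : ∀ j : Fin r, Matrix (Fin (m j)) (Fin (m j)) (ZMod 2))
    (hF : ∀ j, IsUnit (F j)) (j j' : Fin r) (hjj' : j < j') :
    (Matrix.fromCols
        (shiftMatrix q ^ (q - n j) * Gmat n m q F j)
        (shiftMatrix q ^ (q - n j') * Gmat n m q F j')).rank
      = (shiftMatrix q ^ (q - n j) * Gmat n m q F j).rank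
        + (shiftMatrix q ^ (q - n j') * Gmat n m q F j').rank ∧
    (shiftMatrix q ^ (q - n j) * Gmat n m q F j).rank
        + (shiftMatrix q ^ (q - n j') * Gmat n m q F j').rank = m j + m j' := by
  have hnq : ∀ k : Fin r, n k ≤ q := fun k =>
    hq ▸ hanti ⟨0, hr⟩ k (Fin.mk_le_of_le_val (Nat.zero_le _))
  have hmj : m j ≤ ∑ i ∈ Finset.Ici j, m i :=
    Finset.single_le_sum (f := m) (fun _ _ => Nat.zero_le _) (Finset.mem_Ici.mpr le_rfl)
  have hmj' : m j' ≤ ∑ i ∈ Finset.Ici j', m i :=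
    Finset.single_le_sum (f := m) (fun _ _ => Nat.zero_le _) (Finset.mem_Ici.mpr le_rfl)
  have hsum : (∑ i ∈ Finset.Ici j', m i) + m j ≤ ∑ i ∈ Finset.Ici j, m i := by
    have hsub : insert j (Finset.Ici j') ⊆ Finset.Ici j := by
      intro x hx
      rcases Finset.mem_insert.mp hx with h | h
      · simp [h]
      · exact Finset.mem_Ici.mpr (le_trans hjj'.le (Finset.mem_Ici.mp h))
    have hnotmem : j ∉ Finset.Ici j' := by simp [hjj'.not_ge]
    calc (∑ i ∈ Finset.Ici j', m i) + m j = ∑ i ∈ insert j (Finset.Ici j'), m i := by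
          rw [Finset.sum_insert hnotmem]; ring
      _ ≤ _ := Finset.sum_le_sum_of_subset hsub
  have hmnj := hm j
  have hmnj' := hm j'
  have hnjq := hnq j
  have hnjq' := hnq j'
  have hA : shiftMatrix q ^ (q - n j) * Gmat n m q F j
      = blockAt q (m j) (q - ∑ i ∈ Finset.Ici j, m i) (F j) := by
    rw [Gmat, shiftPow_mul_blockAt _ _ _ _ _ (by omega),
      (by omega : (n j - ∑ i ∈ Finset.Ici j, m i) + (q - n j)
        = q - ∑ i ∈ Finset.Ici j, m i)]
  have hB : shiftMatrix q ^ (q - n j') * Gmat n m q F j'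
      = blockAt q (m j') (q - ∑ i ∈ Finset.Ici j', m i) (F j') := by
    rw [Gmat, shiftPow_mul_blockAt _ _ _ _ _ (by omega),
      (by omega : (n j' - ∑ i ∈ Finset.Ici j', m i) + (q - n j')
        = q - ∑ i ∈ Finset.Ici j', m i)]
  rw [hA, hB]
  have hrA : (blockAt q (m j) (q - ∑ i ∈ Finset.Ici j, m i) (F j)).rank = m j :=
    blockAt_rank _ _ _ _ (hF j) (by omega)
  have hrB : (blockAt q (m j') (q - ∑ i ∈ Finset.Ici j', m i) (F j')).rank = m j' :=
    blockAt_rank _ _ _ _ (hF j') (by omega)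
  set M := Matrix.fromCols (blockAt q (m j) (q - ∑ i ∈ Finset.Ici j, m i) (F j))
    (blockAt q (m j') (q - ∑ i ∈ Finset.Ici j', m i) (F j')) with hM
  have hrank : M.rank = m j + m j' := by
    apply le_antisymm
    · simpa using M.rank_le_card_width
    · let ρ : Fin (m j) ⊕ Fin (m j') → Fin q :=
        Sum.elim (fun k => ⟨q - (∑ i ∈ Finset.Ici j, m i) + (k : ℕ), by omega⟩)
          (fun k => ⟨q - (∑ i ∈ Finset.Ici j', m i) + (k : ℕ), by omega⟩)
      have hsub : M.submatrix ρ id = Matrix.fromBlocks (F j) 0 0 (F j') := by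
        ext s t
        cases s with
        | inl k =>
          cases t with
          | inl x =>
            simp only [Matrix.submatrix_apply, hM, ρ, Sum.elim_inl, id,
              Matrix.fromCols_apply_inl, blockAt, Matrix.of_apply,
              Matrix.fromBlocks_apply₁₁, Fin.val_mk]
            rw [dif_pos (by omega)]
            congr 1
            apply Fin.ext
            simp only [Fin.val_mk]
            omega
          | inr x =>
            simp only [Matrix.submatrix_apply, hM, ρ, Sum.elim_inl, id,
              Matrix.fromCols_apply_inr, blockAt, Matrix.of_apply,
              Matrix.fromBlocks_apply₁₂, Fin.val_mk, Matrix.zero_apply]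
            rw [dif_neg (by omega)]
        | inr k =>
          cases t with
          | inl x =>
            simp only [Matrix.submatrix_apply, hM, ρ, Sum.elim_inr, id,
              Matrix.fromCols_apply_inl, blockAt, Matrix.of_apply,
              Matrix.fromBlocks_apply₂₁, Fin.val_mk, Matrix.zero_apply]
            rw [dif_neg (by omega)]
          | inr x =>
            simp only [Matrix.submatrix_apply, hM, ρ, Sum.elim_inr, id,
              Matrix.fromCols_apply_inr, blockAt, Matrix.of_apply,
              Matrix.fromBlocks_apply₂₂, Fin.val_mk]
            rw [dif_pos (by omega)]
            congr 1
            apply Fin.ext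
            simp only [Fin.val_mk]
            omega
      have hunit : IsUnit (Matrix.fromBlocks (F j) 0 0 (F j')) := by
        have iA := (hF j).invertible
        have iD := (hF j').invertible
        exact @isUnit_of_invertible _ _ _ (Matrix.fromBlocksZero₂₁Invertible (F j) 0 (F j'))
      have hrFB : (Matrix.fromBlocks (F j) 0 0 (F j')).rank = m j + m j' := by
        rw [Matrix.rank_of_isUnit _ hunit]
        simp
      calc (m j + m j' : ℕ) = (Matrix.fromBlocks (F j) 0 0 (F j')).rank := hrFB.symm
        _ = (M.submatrix ρ id).rank := by rw [hsub]
        _ ≤ M.rank := rank_submatrix_rows_le _ _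
  exact ⟨by rw [hrank, hrA, hrB], by rw [hrA, hrB]⟩
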